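/- arXiv:2311.17512 — 5 statements merged into one kernel-verified Lean document; each statement's English description precedes it below -/
import Mathlib

section
/- Let ρ: ℝ → ℝ be continuous and 2π-periodic, and define the k-order function ρ_k(θ) = ∑_{m=0}^{k-1} ρ(θ + 2mπ/k) for an integer k ≥ 2. Then ∫_0^{π/k} ρ_k(θ) ρ_k(θ + π/k) dθ = (1/2) ∑_{m=1}^{k} ∫_0^{2π} ρ(θ) ρ(θ + (2m-1)π/k) dθ. -/
open Real Finset

private lemma sum_succ_eq_aux (k : ℕ) (g : ℤ → ℝ) (h : g k = g 0) :
    ∑ n ∈ Finset.range k, g ((n : ℤ) + 1) = ∑ n ∈ Finset.range k, g n := by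
  have h1 : ∑ n ∈ Finset.range k, g ((n : ℤ) + 1)
      = ∑ n ∈ Finset.range k, (fun n : ℕ => g (n : ℤ)) (n + 1) :=
    Finset.sum_congr rfl fun n _ => by push_cast; ring_nf
  rw [h1, ← sub_eq_iff_eq_add.mpr (Finset.sum_range_succ' (fun n : ℕ => g (n : ℤ)) k)]
  rw [Finset.sum_range_succ]
  simp [h]

private lemma sum_shift_aux (k : ℕ) (f : ℤ → ℝ) (hf : ∀ x, f (x + k) = f x) (a : ℤ) :
    ∑ n ∈ Finset.range k, f ((n : ℤ) + a) = ∑ n ∈ Finset.range k, f n := by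
  induction a using Int.induction_on with
  | zero => simp
  | succ i ih =>
      have key := sum_succ_eq_aux k (fun n => f (n + i)) (by simpa [add_comm] using hf i)
      calc ∑ n ∈ Finset.range k, f ((n : ℤ) + ((i : ℤ) + 1))
          = ∑ n ∈ Finset.range k, (fun n : ℤ => f (n + i)) ((n : ℤ) + 1) :=
            Finset.sum_congr rfl fun n _ => congrArg f (by ring)
        _ = ∑ n ∈ Finset.range k, f ((n : ℤ) + i) := key
        _ = ∑ n ∈ Finset.range k, f n := ih
  | pred i ih =>
      have key := sum_succ_eq_aux k (fun n => f (n + (-(i : ℤ) - 1)))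
        (by simpa [add_comm] using hf (-(i : ℤ) - 1))
      calc ∑ n ∈ Finset.range k, f ((n : ℤ) + (-(i : ℤ) - 1))
          = ∑ n ∈ Finset.range k, (fun n : ℤ => f (n + (-(i : ℤ) - 1))) (n : ℤ) := rfl
        _ = ∑ n ∈ Finset.range k, (fun n : ℤ => f (n + (-(i : ℤ) - 1))) ((n : ℤ) + 1) := key.symm
        _ = ∑ n ∈ Finset.range k, f ((n : ℤ) + (-(i : ℤ))) :=
            Finset.sum_congr rfl fun n _ => congrArg f (by ring)
        _ = ∑ n ∈ Finset.range k, f n := ih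

set_option maxHeartbeats 1000000 in
theorem korder_integral_identity (ρ : ℝ → ℝ)
    (hρ : Continuous ρ) (hper : ∀ θ, ρ (θ + 2 * π) = ρ θ)
    (k : ℕ) (hk : 2 ≤ k) :
    (∫ θ in (0:ℝ)..(π / k),
        (∑ m ∈ Finset.range k, ρ (θ + 2 * (m:ℝ) * π / k)) *
        (∑ m ∈ Finset.range k, ρ (θ + π / k + 2 * (m:ℝ) * π / k)))
      = (1 / 2) * ∑ m ∈ Finset.Icc 1 k,
          ∫ θ in (0:ℝ)..(2 * π), ρ θ * ρ (θ + (2 * (m:ℝ) - 1) * π / k) := by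
  have hk0 : (k : ℝ) ≠ 0 := by
    have : 0 < k := by omega
    exact_mod_cast this.ne'
  have hkpos : (0 : ℝ) < k := by
    have : 0 < k := by omega
    exact_mod_cast this
  -- the k-order function product
  set F : ℝ → ℝ := fun θ =>
    (∑ m ∈ Finset.range k, ρ (θ + 2 * (m:ℝ) * π / k)) *
    (∑ m ∈ Finset.range k, ρ (θ + π / k + 2 * (m:ℝ) * π / k)) with hFdef
  have hcontF : Continuous F := by
    apply Continuous.mul <;>
    · apply continuous_finset_sum
      intro m _
      apply hρ.comp
      fun_prop
  have hintF : ∀ a b : ℝ, IntervalIntegrable F MeasureTheory.volume a b :=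
    fun a b => hcontF.intervalIntegrable a b
  -- period of the inner sum
  have hsum_per : ∀ θ : ℝ, (∑ m ∈ Finset.range k, ρ (θ + 2 * π / k + 2 * (m:ℝ) * π / k))
      = ∑ m ∈ Finset.range k, ρ (θ + 2 * (m:ℝ) * π / k) := by
    intro θ
    have key := sum_succ_eq_aux k (fun d : ℤ => ρ (θ + 2 * (d : ℝ) * π / k))
      (by
        beta_reduce
        have h1 : θ + 2 * ((k : ℤ) : ℝ) * π / k = θ + 2 * π := by
          push_cast; field_simp
        have h2 : θ + 2 * ((0 : ℤ) : ℝ) * π / k = θ := by push_cast; ring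
        rw [h1, h2, hper])
    calc ∑ m ∈ Finset.range k, ρ (θ + 2 * π / k + 2 * (m:ℝ) * π / k)
        = ∑ m ∈ Finset.range k, (fun d : ℤ => ρ (θ + 2 * (d : ℝ) * π / k)) ((m : ℤ) + 1) :=
          Finset.sum_congr rfl fun m _ => congrArg ρ (by push_cast; ring)
      _ = ∑ m ∈ Finset.range k, (fun d : ℤ => ρ (θ + 2 * (d : ℝ) * π / k)) (m : ℤ) := key
      _ = ∑ m ∈ Finset.range k, ρ (θ + 2 * (m:ℝ) * π / k) :=
          Finset.sum_congr rfl fun m _ => congrArg ρ (by push_cast; ring)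
  -- F is periodic with period π/k
  have hFper : Function.Periodic F (π / k) := by
    intro θ
    show F (θ + π / k) = F θ
    have h2 : (∑ m ∈ Finset.range k, ρ (θ + π / k + π / k + 2 * (m:ℝ) * π / k))
        = ∑ m ∈ Finset.range k, ρ (θ + 2 * (m:ℝ) * π / k) := by
      calc ∑ m ∈ Finset.range k, ρ (θ + π / k + π / k + 2 * (m:ℝ) * π / k)
          = ∑ m ∈ Finset.range k, ρ (θ + 2 * π / k + 2 * (m:ℝ) * π / k) :=
            Finset.sum_congr rfl fun m _ => congrArg ρ (by ring)
        _ = _ := hsum_per θ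
    simp only [hFdef]
    rw [h2, mul_comm]
  -- integral over full period
  have hD : (∫ θ in (0:ℝ)..(2 * π), F θ) = 2 * (k : ℝ) * ∫ θ in (0:ℝ)..(π / k), F θ := by
    have h2pi : (2 * π : ℝ) = 0 + ((2 * k : ℤ)) • (π / k) := by
      rw [zsmul_eq_mul]; push_cast; field_simp
      ring
    rw [h2pi, hFper.intervalIntegral_add_zsmul_eq (2 * k) 0 hintF]
    rw [zero_add, zsmul_eq_mul]
    push_cast
    ring
  -- shifted correlation integrals indexed by ℤ
  set jfZ : ℤ → ℝ := fun d => ∫ θ in (0:ℝ)..(2 * π), ρ θ * ρ (θ + (2 * (d : ℝ) + 1) * π / k)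
    with hjfZdef
  -- each cross term
  have hterm : ∀ m n : ℕ,
      (∫ θ in (0:ℝ)..(2 * π), ρ (θ + 2 * (m:ℝ) * π / k) * ρ (θ + π / k + 2 * (n:ℝ) * π / k))
        = jfZ ((n : ℤ) - m) := by
    intro m n
    set c : ℝ := (2 * (((n : ℤ) - m : ℤ) : ℝ) + 1) * π / k with hc
    set G : ℝ → ℝ := fun θ => ρ θ * ρ (θ + c) with hGdef
    have hGper : Function.Periodic G (2 * π) := by
      intro θ
      simp only [hGdef]
      rw [show θ + 2 * π + c = (θ + c) + 2 * π by ring, hper, hper]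
    have hpoint : ∀ θ : ℝ, ρ (θ + 2 * (m:ℝ) * π / k) * ρ (θ + π / k + 2 * (n:ℝ) * π / k)
        = G (θ + 2 * (m:ℝ) * π / k) := by
      intro θ
      simp only [hGdef]
      congr 1
      apply congrArg ρ
      rw [hc]
      push_cast
      field_simp
      ring
    calc (∫ θ in (0:ℝ)..(2 * π), ρ (θ + 2 * (m:ℝ) * π / k) * ρ (θ + π / k + 2 * (n:ℝ) * π / k))
        = ∫ θ in (0:ℝ)..(2 * π), G (θ + 2 * (m:ℝ) * π / k) := by
          simp only [hpoint]
      _ = ∫ θ in (0 + 2 * (m:ℝ) * π / k)..(2 * π + 2 * (m:ℝ) * π / k), G θ :=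
          intervalIntegral.integral_comp_add_right G _
      _ = ∫ θ in (0:ℝ)..(0 + 2 * π), G θ := by
          rw [show (2 * π + 2 * (m:ℝ) * π / k) = 0 + 2 * (m:ℝ) * π / k + 2 * π by ring]
          exact hGper.intervalIntegral_add_eq _ 0
      _ = jfZ ((n : ℤ) - m) := by rw [zero_add]
  -- jfZ is k-periodic
  have hjper : ∀ d : ℤ, jfZ (d + k) = jfZ d := by
    intro d
    simp only [hjfZdef]
    have : ∀ θ : ℝ, ρ (θ + (2 * (((d + k : ℤ)) : ℝ) + 1) * π / k)
        = ρ (θ + (2 * ((d : ℤ) : ℝ) + 1) * π / k) := by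
      intro θ
      have harg : θ + (2 * (((d + k : ℤ)) : ℝ) + 1) * π / k
          = (θ + (2 * ((d : ℤ) : ℝ) + 1) * π / k) + 2 * π := by
        push_cast
        field_simp
        ring
      rw [harg, hper]
    simp only [this]
  -- expand the double sum
  have hE : (∫ θ in (0:ℝ)..(2 * π), F θ)
      = (k : ℝ) * ∑ n ∈ Finset.range k, jfZ n := by
    have hFexp : ∀ θ : ℝ, F θ = ∑ m ∈ Finset.range k, ∑ n ∈ Finset.range k,
        ρ (θ + 2 * (m:ℝ) * π / k) * ρ (θ + π / k + 2 * (n:ℝ) * π / k) := by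
      intro θ
      simp only [hFdef]
      rw [Finset.sum_mul_sum]
    have hint1 : ∀ m ∈ Finset.range k, IntervalIntegrable
        (fun θ : ℝ => ∑ n ∈ Finset.range k,
          ρ (θ + 2 * (m:ℝ) * π / k) * ρ (θ + π / k + 2 * (n:ℝ) * π / k))
        MeasureTheory.volume 0 (2 * π) := by
      intro m _
      apply Continuous.intervalIntegrable
      apply continuous_finset_sum
      intro n _
      apply Continuous.mul <;> · apply hρ.comp; fun_prop
    have hint2 : ∀ m : ℕ, ∀ n ∈ Finset.range k, IntervalIntegrable
        (fun θ : ℝ => ρ (θ + 2 * (m:ℝ) * π / k) * ρ (θ + π / k + 2 * (n:ℝ) * π / k))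
        MeasureTheory.volume 0 (2 * π) := by
      intro m n _
      apply Continuous.intervalIntegrable
      apply Continuous.mul <;> · apply hρ.comp; fun_prop
    calc (∫ θ in (0:ℝ)..(2 * π), F θ)
        = ∫ θ in (0:ℝ)..(2 * π), ∑ m ∈ Finset.range k, ∑ n ∈ Finset.range k,
            ρ (θ + 2 * (m:ℝ) * π / k) * ρ (θ + π / k + 2 * (n:ℝ) * π / k) := by
          simp only [hFexp]
      _ = ∑ m ∈ Finset.range k, ∫ θ in (0:ℝ)..(2 * π), ∑ n ∈ Finset.range k,
            ρ (θ + 2 * (m:ℝ) * π / k) * ρ (θ + π / k + 2 * (n:ℝ) * π / k) := by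
          exact intervalIntegral.integral_finset_sum hint1
      _ = ∑ m ∈ Finset.range k, ∑ n ∈ Finset.range k, ∫ θ in (0:ℝ)..(2 * π),
            ρ (θ + 2 * (m:ℝ) * π / k) * ρ (θ + π / k + 2 * (n:ℝ) * π / k) := by
          exact Finset.sum_congr rfl fun m _ =>
            intervalIntegral.integral_finset_sum (hint2 m)
      _ = ∑ m ∈ Finset.range k, ∑ n ∈ Finset.range k, jfZ ((n : ℤ) - m) := by
          apply Finset.sum_congr rfl; intro m _
          apply Finset.sum_congr rfl; intro n _
          exact hterm m n
      _ = ∑ m ∈ Finset.range k, ∑ n ∈ Finset.range k, jfZ n := by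
          apply Finset.sum_congr rfl
          intro m _
          have := sum_shift_aux k jfZ hjper (-(m : ℤ))
          calc ∑ n ∈ Finset.range k, jfZ ((n : ℤ) - m)
              = ∑ n ∈ Finset.range k, jfZ ((n : ℤ) + (-(m : ℤ))) :=
                Finset.sum_congr rfl fun n _ => congrArg jfZ (by ring)
            _ = ∑ n ∈ Finset.range k, jfZ n := this
      _ = (k : ℝ) * ∑ n ∈ Finset.range k, jfZ n := by
          rw [Finset.sum_const, card_range, nsmul_eq_mul]
  -- rewrite the RHS sum
  have hR : (∑ m ∈ Finset.Icc 1 k,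
        ∫ θ in (0:ℝ)..(2 * π), ρ θ * ρ (θ + (2 * (m:ℝ) - 1) * π / k))
      = ∑ n ∈ Finset.range k, jfZ n := by
    rw [← Finset.Ico_add_one_right_eq_Icc, Finset.sum_Ico_eq_sum_range]
    apply Finset.sum_congr rfl
    intro n _
    simp only [hjfZdef]
    congr 1
    ext θ
    congr 2
    push_cast
    ring
  -- conclude
  have hgoal : 2 * (k : ℝ) * (∫ θ in (0:ℝ)..(π / k), F θ)
      = (k : ℝ) * ∑ n ∈ Finset.range k, jfZ n := by rw [← hD, hE]
  rw [hR]
  have h2 : (2 : ℝ) * (∫ θ in (0:ℝ)..(π / k), F θ) = ∑ n ∈ Finset.range k, jfZ n :=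
    mul_left_cancel₀ hk0 (by linear_combination hgoal)
  linarith [h2]
end

section
/- Let S be a planar star body with continuous positive radial function ρ(S,·), area A(S) = (1/2)∫_0^{2π} ρ(S,θ)² dθ, and dual mixed area Ã(S,B) = (1/2)∫_0^{2π} ρ(S,θ) dθ. Let k ≥ 2 be an integer and suppose that for every n whose quotient n/k is an even integer, the nth Fourier coefficients of ρ(S,·) vanish. Then for every λ with 0 ≤ λ ≤ k/π, ∫_0^{π/k} ρ_k(S,θ) ρ_k(S,θ+π/k) dθ ≤ k·A(S) + λ(Ã(S,B)² − π·A(S)), where ρ_k(S,θ) = ∑_{m=0}^{k-1} ρ(S, θ + 2mπ/k). -/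
/-!
Translating `ρ` by the `2k` points `mπ/k` and summing multiplies its `n`-th Fourier
coefficient by `∑ₘ e^{inmπ/k}`, which vanishes unless `2k ∣ n`. The hypothesis kills the
remaining coefficients with `n ≠ 0`, so `ρ_k(θ) + ρ_k(θ + π/k)` is the constant
`(k/π) ∫ ρ = 2k Ã(S,B)/π`. For two functions with constant sum `c`, the product is at most
`c²/4` (AM-GM), so the integral is at most `k Ã(S,B)²/π`. Cauchy-Schwarz gives
`Ã(S,B)² ≤ π A(S)`, and the right-hand side exceeds `k Ã(S,B)²/π` by
`(k/π - λ)(π A(S) - Ã(S,B)²) ≥ 0`.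
-/

open Real Finset MeasureTheory AddCircle Function

section Circle
variable {T : ℝ}

theorem fourier_neg_eq_mul_fourier_neg_add (n : ℤ) (s t : AddCircle T) :
    fourier (-n) t = fourier n s * fourier (-n) (t + s) := by
  have hadd : fourier (-n) (t + s) = fourier (-n) t * fourier (-n) s := by
    simp only [fourier_apply, smul_add, toCircle_add, Circle.coe_mul]
  rw [hadd, mul_left_comm, ← fourier_add, add_neg_cancel, fourier_zero, mul_one]

variable [hT : Fact (0 < T)]

theorem fourierCoeff_comp_add_right {E : Type*} [NormedAddCommGroup E] [NormedSpace ℂ E]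
    (f : AddCircle T → E) (s : AddCircle T) (n : ℤ) :
    fourierCoeff (fun t => f (t + s)) n = fourier n s • fourierCoeff f n := by
  calc fourierCoeff (fun t => f (t + s)) n
      = ∫ t, fourier n s • (fourier (-n) (t + s) • f (t + s)) ∂haarAddCircle := by
        simp only [fourierCoeff, smul_smul, ← fourier_neg_eq_mul_fourier_neg_add]
    _ = ∫ t, fourier n s • (fourier (-n) t • f t) ∂haarAddCircle :=
        integral_add_right_eq_self (fun t => fourier n s • (fourier (-n) t • f t)) s
    _ = fourier n s • fourierCoeff f n := integral_smul _ _

theorem fourier_coe_div_eq_one_iff {N : ℕ} (hN : N ≠ 0) (n : ℤ) :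
    fourier n ((T / N : ℝ) : AddCircle T) = 1 ↔ (N : ℤ) ∣ n := by
  rw [fourier_apply, ← AddCircle.coe_zsmul, Circle.coe_eq_one, ← toCircle_zero (T := T),
    (injective_toCircle hT.out.ne').eq_iff, coe_eq_zero_iff]
  have hN' : (N : ℝ) ≠ 0 := Nat.cast_ne_zero.mpr hN
  constructor
  · rintro ⟨j, hj⟩
    refine ⟨j, ?_⟩
    rw [zsmul_eq_mul, zsmul_eq_mul] at hj
    field_simp at hj
    have : (n : ℝ) = N * j := mul_left_cancel₀ hT.out.ne' (by linear_combination -hj)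
    exact_mod_cast this
  · rintro ⟨j, rfl⟩
    refine ⟨j, ?_⟩
    simp only [zsmul_eq_mul]
    push_cast
    field_simp

theorem sum_fourier_nsmul_coe_div (N : ℕ) (n : ℤ) :
    ∑ m ∈ range N, fourier n (m • ((T / N : ℝ) : AddCircle T)) =
      if (N : ℤ) ∣ n then (N : ℂ) else 0 := by
  rcases eq_or_ne N 0 with rfl | hN
  · simp
  set ω := fourier n ((T / N : ℝ) : AddCircle T)
  have hpow (m : ℕ) : fourier n (m • ((T / N : ℝ) : AddCircle T)) = ω ^ m := by
    simp only [ω, fourier_apply, smul_comm n m, toCircle_nsmul, Circle.coe_pow]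
  simp only [hpow]
  split_ifs with h
  · simp [ω, (fourier_coe_div_eq_one_iff hN n).2 h]
  · have hωN : ω ^ N = 1 := by
      rw [← hpow, ← AddCircle.coe_nsmul, nsmul_eq_mul,
        mul_div_cancel₀ _ (Nat.cast_ne_zero.mpr hN), coe_period, fourier_eval_zero]
    rw [geom_sum_eq (mt (fourier_coe_div_eq_one_iff hN n).1 h), hωN, sub_self, zero_div]

theorem ContinuousMap.apply_eq_fourierCoeff_zero (f : C(AddCircle T, ℂ))
    (h : ∀ n ≠ 0, fourierCoeff f n = 0) (t : AddCircle T) : f t = fourierCoeff f 0 := by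
  have hsum : Summable (fourierCoeff f) :=
    summable_of_ne_finset_zero (s := {0}) fun n hn => h n (by simpa using hn)
  have hsingle :
      HasSum (fun n => fourierCoeff f n • fourier n t) (fourierCoeff f 0 • fourier 0 t) :=
    hasSum_single 0 fun n hn => by rw [h n hn, zero_smul]
  simpa using (has_pointwise_sum_fourier_series_of_summable hsum t).unique hsingle

theorem ContinuousMap.sum_apply_add_nsmul_eq (f : C(AddCircle T, ℂ)) {N : ℕ}
    (h : ∀ n : ℤ, n ≠ 0 → (N : ℤ) ∣ n → fourierCoeff f n = 0) (t : AddCircle T) :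
    ∑ m ∈ range N, f (t + m • ((T / N : ℝ) : AddCircle T)) = N * fourierCoeff f 0 := by
  let g : C(AddCircle T, ℂ) :=
    ∑ m ∈ range N, f.comp (ContinuousMap.addRight (m • ((T / N : ℝ) : AddCircle T)))
  have hcoeff (n : ℤ) :
      fourierCoeff g n = (if (N : ℤ) ∣ n then (N : ℂ) else 0) * fourierCoeff f n := by
    rw [← sum_fourier_nsmul_coe_div (T := T), sum_mul, ContinuousMap.coe_sum, fourierCoeff.sum]
    · rw [Finset.sum_apply]
      exact sum_congr rfl fun m _ => fourierCoeff_comp_add_right f _ n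
    · exact fun m _ => (map_continuous _).integrable_of_hasCompactSupport (.of_compactSpace _)
  have hg := g.apply_eq_fourierCoeff_zero (fun n hn => by
    rw [hcoeff]; split_ifs with hdvd
    · rw [h n hn hdvd, mul_zero]
    · rw [zero_mul]) t
  rw [hcoeff, if_pos (dvd_zero _)] at hg
  simpa [g] using hg

end Circle

local instance : Fact (0 < 2 * π) := ⟨two_pi_pos⟩

noncomputable def Function.Periodic.liftContinuousMap {f : ℝ → ℝ} {T : ℝ} (hper : Periodic f T)
    (hf : Continuous f) : C(AddCircle T, ℂ) :=
  ⟨(hper.comp Complex.ofReal).lift,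
    continuous_coinduced_dom.mpr (Complex.continuous_ofReal.comp hf)⟩

@[simp]
theorem Function.Periodic.liftContinuousMap_coe {f : ℝ → ℝ} {T : ℝ} (hper : Periodic f T)
    (hf : Continuous f) (x : ℝ) : hper.liftContinuousMap hf x = f x :=
  rfl

theorem Function.Periodic.fourierCoeff_liftContinuousMap {f : ℝ → ℝ} (hper : Periodic f (2 * π))
    (hf : Continuous f) (n : ℤ) :
    fourierCoeff (hper.liftContinuousMap hf) n =
      ((∫ x in (0 : ℝ)..2 * π, f x * cos (n * x) : ℝ) -
        Complex.I * (∫ x in (0 : ℝ)..2 * π, f x * sin (n * x) : ℝ)) / (2 * π) := by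
  have hintegrand (x : ℝ) : fourier (-n) (x : AddCircle (2 * π)) • (f x : ℂ) =
      ((f x * cos (n * x) : ℝ) : ℂ) - Complex.I * ((f x * sin (n * x) : ℝ) : ℂ) := by
    have harg : 2 * π * Complex.I * ((-n : ℤ) : ℂ) * x / ((2 * π : ℝ) : ℂ) =
        ((-(n * x) : ℝ) : ℂ) * Complex.I := by
      push_cast
      field_simp
    rw [fourier_coe_apply, smul_eq_mul, harg, Complex.exp_mul_I, ← Complex.ofReal_cos,
      ← Complex.ofReal_sin, cos_neg, sin_neg]
    push_cast
    ring
  rw [fourierCoeff_eq_intervalIntegral _ n 0, zero_add]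
  simp only [liftContinuousMap_coe, hintegrand]
  rw [intervalIntegral.integral_sub, intervalIntegral.integral_const_mul,
    intervalIntegral.integral_ofReal, intervalIntegral.integral_ofReal]
  · rw [Complex.real_smul]; push_cast; ring
  all_goals exact (by fun_prop : Continuous _).intervalIntegrable _ _

theorem Function.Periodic.fourierCoeff_liftContinuousMap_eq_zero {f : ℝ → ℝ}
    (hper : Periodic f (2 * π)) (hf : Continuous f) {j : ℕ}
    (hcos : ∫ x in (0 : ℝ)..2 * π, f x * cos (j * x) = 0)
    (hsin : ∫ x in (0 : ℝ)..2 * π, f x * sin (j * x) = 0) {n : ℤ} (hn : n = j ∨ n = -j) :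
    fourierCoeff (hper.liftContinuousMap hf) n = 0 := by
  rw [hper.fourierCoeff_liftContinuousMap hf]
  rcases hn with rfl | rfl
  · simp [hcos, hsin]
  · simp [cos_neg, sin_neg, intervalIntegral.integral_neg, hcos, hsin]

theorem Function.Periodic.sum_comp_add_eq_integral {f : ℝ → ℝ} (hper : Periodic f (2 * π))
    (hf : Continuous f) {N : ℕ}
    (h : ∀ j : ℕ, 0 < j → N ∣ j →
      (∫ x in (0 : ℝ)..2 * π, f x * cos (j * x)) = 0 ∧
        ∫ x in (0 : ℝ)..2 * π, f x * sin (j * x) = 0)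
    (θ : ℝ) :
    ∑ m ∈ range N, f (θ + m * (2 * π / N)) = N / (2 * π) * ∫ x in (0 : ℝ)..2 * π, f x := by
  have hcoeff (n : ℤ) (hn : n ≠ 0) (hdvd : (N : ℤ) ∣ n) :
      fourierCoeff (hper.liftContinuousMap hf) n = 0 := by
    obtain ⟨j, hj⟩ := Int.eq_nat_or_neg n
    have hjN : N ∣ j := by
      rcases hj with rfl | rfl <;> simpa [Int.natCast_dvd_natCast] using hdvd
    have hj0 : 0 < j := by rcases hj with rfl | rfl <;> omega
    obtain ⟨hcos, hsin⟩ := h j hj0 hjN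
    exact hper.fourierCoeff_liftContinuousMap_eq_zero hf hcos hsin hj
  have := (hper.liftContinuousMap hf).sum_apply_add_nsmul_eq hcoeff θ
  simp only [← AddCircle.coe_nsmul, ← AddCircle.coe_add, nsmul_eq_mul, liftContinuousMap_coe,
    hper.fourierCoeff_liftContinuousMap hf, Int.cast_zero, zero_mul, cos_zero, sin_zero,
    mul_one, mul_zero, intervalIntegral.integral_zero, Complex.ofReal_zero, sub_zero] at this
  apply Complex.ofReal_injective
  push_cast
  rw [this]
  ring

theorem Finset.sum_range_two_mul {M : Type*} [AddCommMonoid M] (f : ℕ → M) (n : ℕ) :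
    ∑ m ∈ range (2 * n), f m = ∑ m ∈ range n, f (2 * m) + ∑ m ∈ range n, f (2 * m + 1) := by
  induction n with
  | zero => simp
  | succ n ih =>
    rw [show 2 * (n + 1) = 2 * n + 1 + 1 by ring, sum_range_succ, sum_range_succ, ih,
      sum_range_succ (fun m => f (2 * m)), sum_range_succ (fun m => f (2 * m + 1))]
    abel

theorem sq_intervalIntegral_le {f : ℝ → ℝ} {a b : ℝ} (hab : a ≤ b)
    (hf : IntervalIntegrable f volume a b)
    (hf2 : IntervalIntegrable (fun x => f x ^ 2) volume a b) :
    (∫ x in a..b, f x) ^ 2 ≤ (b - a) * ∫ x in a..b, f x ^ 2 := by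
  have hquad (c : ℝ) :
      0 ≤ (b - a) * (c * c) + (-2 * ∫ x in a..b, f x) * c + ∫ x in a..b, f x ^ 2 := by
    have hexpand : ∫ x in a..b, (f x - c) ^ 2 =
        (b - a) * (c * c) + (-2 * ∫ x in a..b, f x) * c + ∫ x in a..b, f x ^ 2 := by
      simp only [sub_sq]
      have hlin : IntervalIntegrable (fun x => 2 * f x * c) volume a b :=
        (hf.const_mul 2).mul_const c
      rw [intervalIntegral.integral_add (hf2.sub hlin) intervalIntegrable_const,
        intervalIntegral.integral_sub hf2 hlin, intervalIntegral.integral_mul_const,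
        intervalIntegral.integral_const_mul, intervalIntegral.integral_const, smul_eq_mul]
      ring
    rw [← hexpand]
    exact intervalIntegral.integral_nonneg hab fun x _ => sq_nonneg _
  have := discrim_le_zero hquad
  rw [discrim] at this
  linarith

theorem intervalIntegral_mul_le_of_add_eq {p q : ℝ → ℝ} {a b c : ℝ} (hab : a ≤ b)
    (hpq : IntervalIntegrable (fun x => p x * q x) volume a b)
    (h : ∀ x ∈ Set.Icc a b, p x + q x = c) :
    ∫ x in a..b, p x * q x ≤ (b - a) * (c / 2) ^ 2 := by
  have hamgm (x : ℝ) (hx : x ∈ Set.Icc a b) : p x * q x ≤ (c / 2) ^ 2 := by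
    rw [← h x hx]
    nlinarith [sq_nonneg (p x - q x)]
  calc ∫ x in a..b, p x * q x ≤ ∫ _ in a..b, (c / 2) ^ 2 :=
        intervalIntegral.integral_mono_on hab hpq intervalIntegrable_const hamgm
    _ = (b - a) * (c / 2) ^ 2 := by rw [intervalIntegral.integral_const, smul_eq_mul]

noncomputable def kOrderRadial (ρ : ℝ → ℝ) (k : ℕ) (θ : ℝ) : ℝ :=
  ∑ m ∈ range k, ρ (θ + 2 * m * π / k)

theorem kOrderRadial_add_kOrderRadial_add_pi_div (ρ : ℝ → ℝ) {k : ℕ} (hk : k ≠ 0) (θ : ℝ) :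
    kOrderRadial ρ k θ + kOrderRadial ρ k (θ + π / k) =
      ∑ m ∈ range (2 * k), ρ (θ + m * (2 * π / (2 * k : ℕ))) := by
  rw [sum_range_two_mul, kOrderRadial, kOrderRadial]
  congr 1 <;> refine sum_congr rfl fun m _ => congrArg ρ ?_ <;> push_cast <;> field_simp
  ring

theorem sharp_dual_chernoff_ou_pan_general (ρ : ℝ → ℝ) (a b : ℕ → ℝ)
    (hρ : Continuous ρ) (hper : ∀ θ, ρ (θ + 2 * π) = ρ θ)
    (ha : ∀ n : ℕ, a n = (1 / π) * ∫ θ in (0:ℝ)..(2 * π), ρ θ * Real.cos (n * θ))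
    (hb : ∀ n : ℕ, b n = (1 / π) * ∫ θ in (0:ℝ)..(2 * π), ρ θ * Real.sin (n * θ))
    (k : ℕ) (hk : 2 ≤ k)
    (hvan : ∀ n : ℕ, 0 < n → k ∣ n → Even (n / k) → a n = 0 ∧ b n = 0)
    (lam : ℝ) (hlam1 : lam ≤ (k : ℝ) / π) :
    (∫ θ in (0:ℝ)..(π / k),
        (∑ m ∈ Finset.range k, ρ (θ + 2 * (m:ℝ) * π / k)) *
        (∑ m ∈ Finset.range k, ρ (θ + π / k + 2 * (m:ℝ) * π / k)))
      ≤ (k : ℝ) * ((1 / 2) * ∫ θ in (0:ℝ)..(2 * π), (ρ θ) ^ 2) +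
        lam * (((1 / 2) * ∫ θ in (0:ℝ)..(2 * π), ρ θ) ^ 2 -
               π * ((1 / 2) * ∫ θ in (0:ℝ)..(2 * π), (ρ θ) ^ 2)) := by
  have hk0 : (0 : ℝ) < k := by exact_mod_cast (by omega : 0 < k)
  set L := ∫ θ in (0:ℝ)..(2 * π), ρ θ
  set A := ∫ θ in (0:ℝ)..(2 * π), ρ θ ^ 2
  have hcoeff (j : ℕ) (hj : 0 < j) (hdvd : 2 * k ∣ j) :
      (∫ x in (0 : ℝ)..2 * π, ρ x * cos (j * x)) = 0 ∧
        ∫ x in (0 : ℝ)..2 * π, ρ x * sin (j * x) = 0 := by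
    obtain ⟨i, rfl⟩ := hdvd
    have heven : Even (2 * k * i / k) :=
      ⟨i, by rw [mul_right_comm, Nat.mul_div_cancel _ (by omega)]; ring⟩
    obtain ⟨haj, hbj⟩ := hvan _ hj ⟨2 * i, by ring⟩ heven
    rw [ha, mul_eq_zero] at haj
    rw [hb, mul_eq_zero] at hbj
    exact ⟨haj.resolve_left (by positivity), hbj.resolve_left (by positivity)⟩
  have hsum (θ : ℝ) : kOrderRadial ρ k θ + kOrderRadial ρ k (θ + π / k) = k / π * L := by
    rw [kOrderRadial_add_kOrderRadial_add_pi_div ρ (by omega),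
      Periodic.sum_comp_add_eq_integral hper hρ hcoeff]
    push_cast
    field_simp
    rfl
  have hint := intervalIntegral_mul_le_of_add_eq (a := 0) (b := π / k) (by positivity)
    ((by simp only [kOrderRadial]; fun_prop : Continuous _).intervalIntegrable _ _)
    (fun θ _ => hsum θ)
  have hCS := sq_intervalIntegral_le two_pi_pos.le (hρ.intervalIntegrable 0 (2 * π))
    ((hρ.pow 2).intervalIntegrable _ _)
  have hdefect : 0 ≤ π * (1 / 2 * A) - (1 / 2 * L) ^ 2 := by nlinarith [pi_pos]
  calc _ ≤ (π / k - 0) * (k / π * L / 2) ^ 2 := hint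
    _ = (k : ℝ) * (1 / 2 * A) + lam * ((1 / 2 * L) ^ 2 - π * (1 / 2 * A)) -
          (k / π - lam) * (π * (1 / 2 * A) - (1 / 2 * L) ^ 2) := by
        field_simp
        ring
    _ ≤ _ := sub_le_self _ (mul_nonneg (sub_nonneg.2 hlam1) hdefect)

theorem sharp_dual_chernoff_ou_pan (ρ : ℝ → ℝ) (a b : ℕ → ℝ)
    (hρ : Continuous ρ) (hpos : ∀ θ, 0 < ρ θ) (hper : ∀ θ, ρ (θ + 2 * π) = ρ θ)
    (ha : ∀ n : ℕ, a n = (1 / π) * ∫ θ in (0:ℝ)..(2 * π), ρ θ * Real.cos (n * θ))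
    (hb : ∀ n : ℕ, b n = (1 / π) * ∫ θ in (0:ℝ)..(2 * π), ρ θ * Real.sin (n * θ))
    (k : ℕ) (hk : 2 ≤ k)
    (hvan : ∀ n : ℕ, 0 < n → k ∣ n → Even (n / k) → a n = 0 ∧ b n = 0)
    (lam : ℝ) (hlam0 : 0 ≤ lam) (hlam1 : lam ≤ (k : ℝ) / π) :
    (∫ θ in (0:ℝ)..(π / k),
        (∑ m ∈ Finset.range k, ρ (θ + 2 * (m:ℝ) * π / k)) *
        (∑ m ∈ Finset.range k, ρ (θ + π / k + 2 * (m:ℝ) * π / k)))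
      ≤ (k : ℝ) * ((1 / 2) * ∫ θ in (0:ℝ)..(2 * π), (ρ θ) ^ 2) +
        lam * (((1 / 2) * ∫ θ in (0:ℝ)..(2 * π), ρ θ) ^ 2 -
               π * ((1 / 2) * ∫ θ in (0:ℝ)..(2 * π), (ρ θ) ^ 2)) :=
  sharp_dual_chernoff_ou_pan_general ρ a b hρ hper ha hb k hk hvan lam hlam1
end

section
/- Let S be a planar star body with continuously differentiable radial function ρ(S,·), area A(S) = (1/2)∫_0^{2π} ρ² dθ and oriented area Ã(S) = (1/2)∫_0^{2π} (ρ')² dθ. For every integer k ≥ 2 and every μ ≤ −k, the reverse Chernoff inequality ∫_0^{π/k} ρ_k(S,θ) ρ_k(S,θ+π/k) dθ ≥ k·A(S) + μ·Ã(S) holds, where ρ_k(S,θ) = ∑_{m=0}^{k-1} ρ(S,θ+2mπ/k). -/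
open Real Finset

/-!
Write `P = ρ_k`, which is `2π/k`-periodic, and let `I`, `S`, `S'` be the integrals of `P`, `P²`
and `P'²` over `[0, 2π/k]`.
* Completing the square around the mean of `P` gives `∫₀^{π/k} P(θ) P(θ + π/k) ≥ I²/(2π/k) - S/2`.
* Wirtinger's inequality for `P` minus its mean gives `k² (S - I²/(2π/k)) ≤ S'`.
* Wirtinger's inequality for `ρ - P/k`, which has mean zero and is orthogonal to `P`, gives
  `k ∫ρ² - S ≤ k ∫ρ'² - S'`.
As `S - I²/(2π/k) ≥ 0`, `k² ≥ 2` and `μ ≤ -k`, these combine linearly to the claim.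
-/

open Function intervalIntegral

theorem Function.Periodic.hasDerivAt_periodic {F : Type*} [NormedAddCommGroup F]
    [NormedSpace ℝ F] {f f' : ℝ → F} {c : ℝ} (hf : Periodic f c)
    (hderiv : ∀ x, HasDerivAt f (f' x) x) : Periodic f' c := fun x => by
  have h := (hderiv (x + c)).comp_add_const x c
  rw [show (fun y => f (y + c)) = f from funext hf] at h
  exact h.unique (hderiv x)

open MeasureTheory in
theorem Continuous.memLp_two_restrict_Ioc {E : Type*} [NormedAddCommGroup E] {f : ℝ → E}
    (hf : Continuous f) (a b : ℝ) : MemLp f 2 (volume.restrict (Set.Ioc a b)) :=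
  (memLp_two_iff_integrable_sq_norm hf.aestronglyMeasurable).2 (hf.norm.pow 2).integrableOn_Ioc

theorem wirtinger_inequality {T : ℝ} (hT : 0 < T) {u u' : ℝ → ℝ} (hu : Periodic u T)
    (hderiv : ∀ x, HasDerivAt u (u' x) x) (hu' : Continuous u')
    (hmean : ∫ x in 0..T, u x = 0) :
    (2 * π / T) ^ 2 * ∫ x in 0..T, u x ^ 2 ≤ ∫ x in 0..T, u' x ^ 2 := by
  have hT' : 0 < 0 + T := by simpa using hT
  set c := fourierCoeffOn hT' (fun x => (u x : ℂ))
  set c' := fourierCoeffOn hT' (fun x => (u' x : ℂ))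
  have hc_zero : c 0 = 0 := by
    simp [c, fourierCoeffOn_eq_integral, integral_ofReal, hmean]
  -- integration by parts; the boundary term vanishes since `u T = u 0`
  have hc : ∀ n ≠ 0, c n = T / (2 * π * Complex.I * n) * c' n := by
    intro n hn
    simp only [c, c']
    rw [fourierCoeffOn_of_hasDerivAt hT' hn (fun x _ => (hderiv x).ofReal_comp)
      ((Complex.continuous_ofReal.comp hu').intervalIntegrable _ _)]
    have huT : u T = u 0 := by simpa using hu 0
    have hπ : (π : ℂ) ≠ 0 := by exact_mod_cast pi_ne_zero
    simp only [zero_add, huT, sub_self, mul_zero, zero_sub, Complex.ofReal_zero, sub_zero]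
    field_simp
  have hle : ∀ n, (2 * π / T) ^ 2 * ‖c n‖ ^ 2 ≤ ‖c' n‖ ^ 2 := by
    intro n
    rcases eq_or_ne n 0 with rfl | hn
    · simp [hc_zero]
    have hn1 : (1 : ℝ) ≤ |(n : ℝ)| := by exact_mod_cast Int.one_le_abs hn
    have hnorm : ‖c n‖ = T / (2 * π * |(n : ℝ)|) * ‖c' n‖ := by
      rw [hc n hn, norm_mul, norm_div]
      simp [abs_of_pos hT, abs_of_pos pi_pos]
    rw [hnorm]
    calc (2 * π / T) ^ 2 * (T / (2 * π * |(n : ℝ)|) * ‖c' n‖) ^ 2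
        = ‖c' n‖ ^ 2 / |(n : ℝ)| ^ 2 := by field_simp
      _ ≤ ‖c' n‖ ^ 2 := div_le_self (sq_nonneg _) (one_le_pow₀ hn1)
  have hu_cont : Continuous u := continuous_iff_continuousAt.2 fun x => (hderiv x).continuousAt
  have hparseval := hasSum_le hle
    ((hasSum_sq_fourierCoeffOn hT'
      ((Complex.continuous_ofReal.comp hu_cont).memLp_two_restrict_Ioc 0 (0 + T))).mul_left _)
    (hasSum_sq_fourierCoeffOn hT'
      ((Complex.continuous_ofReal.comp hu').memLp_two_restrict_Ioc 0 (0 + T)))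
  simp only [sub_zero, zero_add, smul_eq_mul, comp_apply, Complex.norm_real, Real.norm_eq_abs,
    sq_abs] at hparseval
  rwa [mul_left_comm, mul_le_mul_iff_right₀ (inv_pos.2 hT)] at hparseval

theorem integral_sub_average_sq {u : ℝ → ℝ} (hu : Continuous u) {T : ℝ} (hT : T ≠ 0) :
    ∫ x in 0..T, (u x - (∫ y in 0..T, u y) / T) ^ 2
      = (∫ x in 0..T, u x ^ 2) - (∫ x in 0..T, u x) ^ 2 / T := by
  set I := ∫ y in 0..T, u y
  calc ∫ x in 0..T, (u x - I / T) ^ 2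
      = ∫ x in 0..T, (u x ^ 2 - 2 * (I / T) * u x + (I / T) ^ 2) := by
        congr 1 with x
        ring
    _ = (∫ x in 0..T, u x ^ 2) - 2 * (I / T) * I + T * (I / T) ^ 2 := by
        rw [integral_add, integral_sub, integral_const_mul, integral_const, smul_eq_mul,
          sub_zero] <;> exact Continuous.intervalIntegrable (by fun_prop) _ _
    _ = (∫ x in 0..T, u x ^ 2) - I ^ 2 / T := by
        field_simp
        ring

theorem sq_integral_div_le_integral_sq {u : ℝ → ℝ} (hu : Continuous u) {T : ℝ} (hT : 0 < T) :
    (∫ x in 0..T, u x) ^ 2 / T ≤ ∫ x in 0..T, u x ^ 2 := by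
  have h : 0 ≤ ∫ x in 0..T, (u x - (∫ y in 0..T, u y) / T) ^ 2 :=
    integral_nonneg hT.le fun x _ => sq_nonneg _
  rw [integral_sub_average_sq hu hT.ne'] at h
  linarith

theorem wirtinger_inequality_sub_average {T : ℝ} (hT : 0 < T) {u u' : ℝ → ℝ} (hu : Periodic u T)
    (hderiv : ∀ x, HasDerivAt u (u' x) x) (hu' : Continuous u') :
    (2 * π / T) ^ 2 * ((∫ x in 0..T, u x ^ 2) - (∫ x in 0..T, u x) ^ 2 / T)
      ≤ ∫ x in 0..T, u' x ^ 2 := by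
  have hu_cont : Continuous u := continuous_iff_continuousAt.2 fun x => (hderiv x).continuousAt
  set M := (∫ y in 0..T, u y) / T
  rw [← integral_sub_average_sq hu_cont hT.ne']
  refine wirtinger_inequality hT (fun x => by simp only [hu x]) (fun x => (hderiv x).sub_const M)
    hu' ?_
  rw [integral_sub (hu_cont.intervalIntegrable _ _) intervalIntegrable_const, integral_const,
    smul_eq_mul, sub_zero]
  field_simp
  ring

/-- For `T = 2π` this is the paper's `k`-order radial function `ρ_k`. -/
noncomputable def translateSum (f : ℝ → ℝ) (T : ℝ) (k : ℕ) (x : ℝ) : ℝ :=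
  ∑ j ∈ range k, f (x + j * (T / k))

section translateSum

variable {f f' : ℝ → ℝ} {T : ℝ} {k : ℕ}

@[fun_prop]
theorem Continuous.translateSum (hf : Continuous f) : Continuous (translateSum f T k) := by
  unfold _root_.translateSum
  fun_prop

theorem hasDerivAt_translateSum (hf : ∀ x, HasDerivAt f (f' x) x) (x : ℝ) :
    HasDerivAt (translateSum f T k) (translateSum f' T k x) x :=
  HasDerivAt.fun_sum fun _ _ => (hf _).comp_add_const x _

theorem periodic_translateSum_div (hf : Periodic f T) (hk : k ≠ 0) :
    Periodic (translateSum f T k) (T / k) := by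
  intro x
  unfold translateSum
  set F : ℕ → ℝ := fun j => f (x + j * (T / k))
  have hF : F k = F 0 := by
    simp [F, mul_div_cancel₀ T (Nat.cast_ne_zero.2 hk), hf x]
  have hshift := (sum_range_succ' F k).symm.trans (sum_range_succ F k)
  rw [hF, add_left_inj] at hshift
  refine (sum_congr rfl fun j _ => ?_).trans hshift
  simp only [F]
  push_cast
  ring_nf

theorem periodic_translateSum (hf : Periodic f T) (hk : k ≠ 0) :
    Periodic (translateSum f T k) T := by
  simpa [mul_div_cancel₀ T (Nat.cast_ne_zero.2 hk)] using
    (periodic_translateSum_div hf hk).nat_mul k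

theorem integral_translateSum (hf : Continuous f) (hk : k ≠ 0) :
    ∫ x in 0..T / k, translateSum f T k x = ∫ x in 0..T, f x := by
  unfold translateSum
  rw [integral_finsetSum fun (j : ℕ) _ =>
    (by fun_prop : Continuous fun x => f (x + j * (T / k))).intervalIntegrable _ _]
  have hpiece : ∀ j : ℕ, ∫ x in 0..T / k, f (x + j * (T / k))
      = ∫ x in j * (T / k)..(j + 1 : ℕ) * (T / k), f x := by
    intro j
    rw [integral_comp_add_right]
    push_cast
    ring_nf
  simp only [hpiece]
  rw [sum_integral_adjacent_intervals fun _ _ => hf.intervalIntegrable _ _]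
  simp [mul_div_cancel₀ T (Nat.cast_ne_zero.2 hk)]

theorem Function.Periodic.intervalIntegral_eq_nat_mul {g : ℝ → ℝ} (hg : Periodic g (T / k))
    (hgc : Continuous g) (hk : k ≠ 0) :
    ∫ x in 0..T, g x = k * ∫ x in 0..T / k, g x := by
  have h := hg.intervalIntegral_add_zsmul_eq k 0 fun _ _ => hgc.intervalIntegrable _ _
  simpa [mul_div_cancel₀ T (Nat.cast_ne_zero.2 hk)] using h

theorem integral_translateSum_mul_self (hf : Periodic f T) (hfc : Continuous f) (hk : k ≠ 0) :
    k * ∫ x in 0..T, translateSum f T k x * f x = ∫ x in 0..T, translateSum f T k x ^ 2 := by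
  set P := translateSum f T k
  have hPf : Periodic (fun x => P x * f x) T := (periodic_translateSum hf hk).mul hf
  have hterm : ∀ j : ℕ, ∫ x in 0..T, P x * f (x + j * (T / k)) = ∫ x in 0..T, P x * f x := by
    intro j
    have hPj : ∀ x, P (x + j * (T / k)) = P x := (periodic_translateSum_div hf hk).nat_mul j
    calc ∫ x in 0..T, P x * f (x + j * (T / k))
        = ∫ x in 0..T, P (x + j * (T / k)) * f (x + j * (T / k)) := by
          simp only [hPj]
      _ = ∫ x in 0..T, P x * f x := by
          rw [integral_comp_add_right (fun x => P x * f x), zero_add, add_comm T,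
            hPf.intervalIntegral_add_eq _ 0, zero_add]
  calc k * ∫ x in 0..T, P x * f x
      = ∑ j ∈ range k, ∫ x in 0..T, P x * f (x + j * (T / k)) := by simp [hterm]
    _ = ∫ x in 0..T, ∑ j ∈ range k, P x * f (x + j * (T / k)) :=
        (integral_finsetSum fun (j : ℕ) _ =>
          (by fun_prop : Continuous fun x => P x * f (x + j * (T / k))).intervalIntegrable _ _).symm
    _ = ∫ x in 0..T, P x ^ 2 := by simp only [← mul_sum, sq]; rfl

theorem integral_sub_translateSum_div (hf : Periodic f T) (hfc : Continuous f) (hk : k ≠ 0) :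
    ∫ x in 0..T, (f x - translateSum f T k x / k) = 0 := by
  rw [integral_sub (hfc.intervalIntegrable _ _) ((by fun_prop : Continuous fun x =>
      translateSum f T k x / k).intervalIntegrable _ _), intervalIntegral.integral_div,
    (periodic_translateSum_div hf hk).intervalIntegral_eq_nat_mul hfc.translateSum hk,
    integral_translateSum hfc hk, mul_div_cancel_left₀ _ (Nat.cast_ne_zero.2 hk), sub_self]

theorem integral_sub_translateSum_div_sq (hf : Periodic f T) (hfc : Continuous f) (hk : k ≠ 0) :
    ∫ x in 0..T, (f x - translateSum f T k x / k) ^ 2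
      = (∫ x in 0..T, f x ^ 2) - (∫ x in 0..T / k, translateSum f T k x ^ 2) / k := by
  set P := translateSum f T k
  have hk' : (k : ℝ) ≠ 0 := Nat.cast_ne_zero.2 hk
  have hfold : ∫ x in 0..T, P x ^ 2 = k * ∫ x in 0..T / k, P x ^ 2 :=
    ((periodic_translateSum_div hf hk).comp (· ^ 2)).intervalIntegral_eq_nat_mul
      (by fun_prop) hk
  have horth : k * ∫ x in 0..T, P x * f x = ∫ x in 0..T, P x ^ 2 :=
    integral_translateSum_mul_self hf hfc hk
  calc ∫ x in 0..T, (f x - P x / k) ^ 2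
      = ∫ x in 0..T, (f x ^ 2 - 2 / k * (P x * f x) + 1 / k ^ 2 * P x ^ 2) := by
        congr 1 with x
        ring
    _ = (∫ x in 0..T, f x ^ 2) - 2 / k * (∫ x in 0..T, P x * f x)
          + 1 / k ^ 2 * ∫ x in 0..T, P x ^ 2 := by
        rw [integral_add, integral_sub, integral_const_mul, integral_const_mul] <;>
          exact Continuous.intervalIntegrable (by fun_prop) _ _
    _ = (∫ x in 0..T, f x ^ 2) - (∫ x in 0..T / k, P x ^ 2) / k := by
        rw [mul_left_cancel₀ hk' (horth.trans hfold), hfold]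
        field_simp
        ring

/-- Wirtinger's inequality for `f - translateSum f T k / k`. -/
theorem wirtinger_inequality_translateSum (hT : 0 < T) (hf : Periodic f T)
    (hderiv : ∀ x, HasDerivAt f (f' x) x) (hf' : Continuous f') (hk : k ≠ 0) :
    (2 * π / T) ^ 2 * (k * (∫ x in 0..T, f x ^ 2) - ∫ x in 0..T / k, translateSum f T k x ^ 2)
      ≤ k * (∫ x in 0..T, f' x ^ 2) - ∫ x in 0..T / k, translateSum f' T k x ^ 2 := by
  have hfc : Continuous f := continuous_iff_continuousAt.2 fun x => (hderiv x).continuousAt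
  have hq := wirtinger_inequality hT (u := fun x => f x - translateSum f T k x / k)
    (fun x => by simp only [hf x, periodic_translateSum hf hk x])
    (fun x => (hderiv x).sub ((hasDerivAt_translateSum hderiv x).div_const _)) (by fun_prop)
    (integral_sub_translateSum_div hf hfc hk)
  rw [integral_sub_translateSum_div_sq hf hfc hk,
    integral_sub_translateSum_div_sq (hf.hasDerivAt_periodic hderiv) hf' hk] at hq
  have hk' : (0 : ℝ) < k := by positivity
  refine Eq.trans_le ?_ ((mul_le_mul_of_nonneg_left hq hk'.le).trans_eq ?_) <;> field_simp

end translateSum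

theorem integral_add_comp_add_self {g : ℝ → ℝ} (hg : Continuous g) (h : ℝ) :
    ∫ x in 0..h, (g x + g (x + h)) = ∫ x in 0..2 * h, g x := by
  rw [integral_add (hg.intervalIntegrable _ _)
      ((by fun_prop : Continuous fun x => g (x + h)).intervalIntegrable _ _),
    integral_comp_add_right, zero_add,
    integral_add_adjacent_intervals (hg.intervalIntegrable _ _) (hg.intervalIntegrable _ _),
    two_mul]

theorem le_integral_mul_comp_add {P : ℝ → ℝ} (hP : Continuous P) {h : ℝ} (hh : 0 < h) :
    (∫ x in 0..2 * h, P x) ^ 2 / (2 * h) - (∫ x in 0..2 * h, P x ^ 2) / 2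
      ≤ ∫ x in 0..h, P x * P (x + h) := by
  set I := ∫ x in 0..2 * h, P x
  set c := I / (2 * h)
  have hpt : ∀ x, 2 * c * (P x + P (x + h)) - 2 * c ^ 2 - (P x ^ 2 + P (x + h) ^ 2) / 2
      ≤ P x * P (x + h) := fun x => by
    nlinarith [sq_nonneg (P x + P (x + h) - 2 * c)]
  have hsq : ∫ x in 0..h, (P x ^ 2 + P (x + h) ^ 2) = ∫ x in 0..2 * h, P x ^ 2 :=
    integral_add_comp_add_self (by fun_prop) h
  have hlhs : ∫ x in 0..h, (2 * c * (P x + P (x + h)) - 2 * c ^ 2 - (P x ^ 2 + P (x + h) ^ 2) / 2)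
      = 2 * c * I - 2 * c ^ 2 * h - (∫ x in 0..2 * h, P x ^ 2) / 2 := by
    rw [integral_sub, integral_sub, integral_const_mul, integral_const,
      intervalIntegral.integral_div, integral_add_comp_add_self hP, hsq, smul_eq_mul, sub_zero,
      mul_comm h]
    all_goals exact Continuous.intervalIntegrable (by fun_prop) _ _
  calc I ^ 2 / (2 * h) - (∫ x in 0..2 * h, P x ^ 2) / 2
      = 2 * c * I - 2 * c ^ 2 * h - (∫ x in 0..2 * h, P x ^ 2) / 2 := by
        simp only [c]
        field_simp
        ring
    _ ≤ ∫ x in 0..h, P x * P (x + h) := hlhs ▸ integral_mono_on hh.le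
        (Continuous.intervalIntegrable (by fun_prop) _ _)
        (Continuous.intervalIntegrable (by fun_prop) _ _) fun x _ => hpt x

theorem reverse_chernoff_general (ρ ρ' : ℝ → ℝ)
    (hρ : Continuous ρ) (hper : ∀ θ, ρ (θ + 2 * π) = ρ θ)
    (hderiv : ∀ θ, HasDerivAt ρ (ρ' θ) θ) (hρ' : Continuous ρ')
    (k : ℕ) (hk : 2 ≤ k) (μ : ℝ) (hμ : μ ≤ -(k : ℝ)) :
    (∫ θ in (0:ℝ)..(π / k),
        (∑ m ∈ Finset.range k, ρ (θ + 2 * (m:ℝ) * π / k)) *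
        (∑ m ∈ Finset.range k, ρ (θ + π / k + 2 * (m:ℝ) * π / k)))
      ≥ (k : ℝ) * ((1 / 2) * ∫ θ in (0:ℝ)..(2 * π), (ρ θ) ^ 2) +
        μ * ((1 / 2) * ∫ θ in (0:ℝ)..(2 * π), (ρ' θ) ^ 2) := by
  have hk0 : k ≠ 0 := by omega
  have hk2 : (2 : ℝ) ≤ k ^ 2 := by
    have : (2 : ℝ) ≤ k := by exact_mod_cast hk
    nlinarith
  have hρk : ∀ θ, ∑ m ∈ range k, ρ (θ + 2 * (m : ℝ) * π / k) = translateSum ρ (2 * π) k θ :=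
    fun θ => sum_congr rfl fun m _ => by ring_nf
  simp only [hρk]
  have hP : Continuous (translateSum ρ (2 * π) k) := hρ.translateSum
  have hcross := le_integral_mul_comp_add hP (by positivity : 0 < π / k)
  have hvar := sq_integral_div_le_integral_sq hP (by positivity : 0 < 2 * π / k)
  have hwirt := wirtinger_inequality_sub_average (by positivity : 0 < 2 * π / k)
    (periodic_translateSum_div hper hk0) (hasDerivAt_translateSum hderiv) hρ'.translateSum
  have henergy := wirtinger_inequality_translateSum two_pi_pos hper hderiv hρ' hk0
  rw [← mul_div_assoc] at hcross
  rw [div_div_cancel₀ two_pi_pos.ne'] at hwirt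
  rw [div_self two_pi_pos.ne', one_pow, one_mul] at henergy
  have hC' : 0 ≤ ∫ θ in 0..2 * π, ρ' θ ^ 2 := integral_nonneg two_pi_pos.le fun _ _ => sq_nonneg _
  linarith [mul_le_mul_of_nonneg_right hμ hC', mul_nonneg (sub_nonneg.2 hk2) (sub_nonneg.2 hvar)]

theorem reverse_chernoff (ρ ρ' : ℝ → ℝ)
    (hρ : Continuous ρ) (hpos : ∀ θ, 0 < ρ θ) (hper : ∀ θ, ρ (θ + 2 * π) = ρ θ)
    (hderiv : ∀ θ, HasDerivAt ρ (ρ' θ) θ) (hρ' : Continuous ρ')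
    (k : ℕ) (hk : 2 ≤ k) (μ : ℝ) (hμ : μ ≤ -(k : ℝ)) :
    (∫ θ in (0:ℝ)..(π / k),
        (∑ m ∈ Finset.range k, ρ (θ + 2 * (m:ℝ) * π / k)) *
        (∑ m ∈ Finset.range k, ρ (θ + π / k + 2 * (m:ℝ) * π / k)))
      ≥ (k : ℝ) * ((1 / 2) * ∫ θ in (0:ℝ)..(2 * π), (ρ θ) ^ 2) +
        μ * ((1 / 2) * ∫ θ in (0:ℝ)..(2 * π), (ρ' θ) ^ 2) :=
  reverse_chernoff_general ρ ρ' hρ hper hderiv hρ' k hk μ hμ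
end

section
/- Let S, T be planar star bodies with continuous positive radial functions ρ(S,·), ρ(T,·), areas A(S), A(T), and let k ≥ 2 be an integer and α ∈ (0,2π). Then (1/(2k²)) ∫_0^{2π} ρ_k(S,θ) ρ_k(T,θ+α) dθ ≤ √(A(S)A(T)), where ρ_k denotes the k-order radial function. -/
open Real Finset MeasureTheory

lemma shift_int' (f : ℝ → ℝ) (hper : ∀ θ, f (θ + 2 * π) = f θ) (c : ℝ) :
    ∫ θ in (0:ℝ)..(2 * π), f (θ + c) = ∫ θ in (0:ℝ)..(2 * π), f θ := by
  have hp : Function.Periodic f (2 * π) := hper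
  rw [intervalIntegral.integral_comp_add_right]
  have := hp.intervalIntegral_add_eq c 0
  simpa [zero_add, add_comm] using this

lemma memL2' (f : ℝ → ℝ) (hf : Continuous f) :
    MemLp f (ENNReal.ofReal 2) (volume.restrict (Set.Ioc (0:ℝ) (2 * π))) := by
  obtain ⟨C, hC⟩ := (isCompact_Icc (a := (0:ℝ)) (b := 2 * π)).exists_bound_of_continuousOn
    hf.continuousOn
  refine MemLp.of_bound hf.aestronglyMeasurable C ?_
  filter_upwards [MeasureTheory.ae_restrict_mem measurableSet_Ioc] with x hx
  exact hC x ⟨le_of_lt hx.1, hx.2⟩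

lemma cs' (f g : ℝ → ℝ) (hf : Continuous f) (hg : Continuous g)
    (hfpos : ∀ x, 0 ≤ f x) (hgpos : ∀ x, 0 ≤ g x) :
    ∫ θ in (0:ℝ)..(2 * π), f θ * g θ ≤
      Real.sqrt (∫ θ in (0:ℝ)..(2 * π), f θ ^ 2) *
      Real.sqrt (∫ θ in (0:ℝ)..(2 * π), g θ ^ 2) := by
  have h2π : (0:ℝ) ≤ 2 * π := by positivity
  have hpq : (2:ℝ).HolderConjugate 2 := Real.HolderConjugate.two_two
  have key := MeasureTheory.integral_mul_le_Lp_mul_Lq_of_nonneg hpq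
    (μ := volume.restrict (Set.Ioc (0:ℝ) (2 * π)))
    (Filter.Eventually.of_forall hfpos) (Filter.Eventually.of_forall hgpos)
    (memL2' f hf) (memL2' g hg)
  rw [intervalIntegral.integral_of_le h2π, intervalIntegral.integral_of_le h2π,
    intervalIntegral.integral_of_le h2π]
  have hfr : ∀ x : ℝ, f x ^ (2:ℝ) = f x ^ 2 := fun x => by
    rw [show ((2:ℝ) = ((2:ℕ):ℝ)) by norm_num, Real.rpow_natCast]
  have hgr : ∀ x : ℝ, g x ^ (2:ℝ) = g x ^ 2 := fun x => by
    rw [show ((2:ℝ) = ((2:ℕ):ℝ)) by norm_num, Real.rpow_natCast]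
  simp only [hfr, hgr] at key
  calc ∫ θ in Set.Ioc (0:ℝ) (2*π), f θ * g θ
      ≤ (∫ θ in Set.Ioc (0:ℝ) (2*π), f θ ^ 2) ^ ((1:ℝ)/2) *
        (∫ θ in Set.Ioc (0:ℝ) (2*π), g θ ^ 2) ^ ((1:ℝ)/2) := key
    _ = _ := by rw [← Real.sqrt_eq_rpow, ← Real.sqrt_eq_rpow]

lemma sumint' (f : ℝ → ℝ) (hf : Continuous f) (hper : ∀ θ, f (θ + 2 * π) = f θ)
    (k : ℕ) (c : ℕ → ℝ) :
    ∫ θ in (0:ℝ)..(2 * π), (∑ m ∈ Finset.range k, f (θ + c m)) ^ 2 ≤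
      (k:ℝ) ^ 2 * ∫ θ in (0:ℝ)..(2 * π), f θ ^ 2 := by
  have h2π : (0:ℝ) ≤ 2 * π := by positivity
  have hcont : ∀ m : ℕ, Continuous fun θ => f (θ + c m) :=
    fun m => hf.comp (continuous_id.add continuous_const)
  have hFc : Continuous fun θ => (∑ m ∈ Finset.range k, f (θ + c m)) ^ 2 :=
    (continuous_finset_sum _ fun m _ => hcont m).pow 2
  have hGc : Continuous fun θ => (k:ℝ) * ∑ m ∈ Finset.range k, f (θ + c m) ^ 2 :=
    continuous_const.mul (continuous_finset_sum _ fun m _ => (hcont m).pow 2)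
  have step1 : ∫ θ in (0:ℝ)..(2 * π), (∑ m ∈ Finset.range k, f (θ + c m)) ^ 2 ≤
      ∫ θ in (0:ℝ)..(2 * π), (k:ℝ) * ∑ m ∈ Finset.range k, f (θ + c m) ^ 2 := by
    apply intervalIntegral.integral_mono_on h2π (hFc.intervalIntegrable _ _)
      (hGc.intervalIntegrable _ _)
    intro x _
    have := sq_sum_le_card_mul_sum_sq (s := Finset.range k) (f := fun m => f (x + c m))
    simpa using this
  refine step1.trans ?_
  rw [intervalIntegral.integral_const_mul]
  rw [intervalIntegral.integral_finset_sum (f := fun m θ => f (θ + c m) ^ 2) (fun m _ => ((hcont m).pow 2).intervalIntegrable _ _)]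
  have heach : ∀ m : ℕ, ∫ θ in (0:ℝ)..(2 * π), f (θ + c m) ^ 2
      = ∫ θ in (0:ℝ)..(2 * π), f θ ^ 2 := fun m =>
    shift_int' (fun θ => f θ ^ 2) (fun θ => by beta_reduce; rw [hper]) (c m)
  rw [Finset.sum_congr rfl fun m _ => heach m, Finset.sum_const, Finset.card_range,
    nsmul_eq_mul]
  ring_nf
  exact le_rfl

theorem generalized_dual_symmetric_mixed_chernoff (ρS ρT : ℝ → ℝ)
    (hρS : Continuous ρS) (hposS : ∀ θ, 0 < ρS θ) (hperS : ∀ θ, ρS (θ + 2 * π) = ρS θ)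
    (hρT : Continuous ρT) (hposT : ∀ θ, 0 < ρT θ) (hperT : ∀ θ, ρT (θ + 2 * π) = ρT θ)
    (k : ℕ) (hk : 2 ≤ k) (α : ℝ) (hα : α ∈ Set.Ioo 0 (2 * π)) :
    (1 / (2 * (k : ℝ) ^ 2)) *
      ∫ θ in (0:ℝ)..(2 * π),
        (∑ m ∈ Finset.range k, ρS (θ + 2 * (m:ℝ) * π / k)) *
        (∑ m ∈ Finset.range k, ρT (θ + α + 2 * (m:ℝ) * π / k))
    ≤ Real.sqrt (((1 / 2) * ∫ θ in (0:ℝ)..(2 * π), (ρS θ) ^ 2) *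
                 ((1 / 2) * ∫ θ in (0:ℝ)..(2 * π), (ρT θ) ^ 2)) := by
  have hkpos : (0:ℝ) < (k:ℝ) := by positivity
  set F : ℝ → ℝ := fun θ => ∑ m ∈ Finset.range k, ρS (θ + 2 * (m:ℝ) * π / k) with hF
  set G : ℝ → ℝ := fun θ => ∑ m ∈ Finset.range k, ρT (θ + α + 2 * (m:ℝ) * π / k) with hG
  have hFc : Continuous F := continuous_finset_sum _ fun m _ =>
    hρS.comp (continuous_id.add continuous_const)
  have hGc : Continuous G := continuous_finset_sum _ fun m _ => by
    have : Continuous fun θ : ℝ => θ + α + 2 * (m:ℝ) * π / k :=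
      (continuous_id.add continuous_const).add continuous_const
    exact hρT.comp this
  have hFpos : ∀ x, 0 ≤ F x := fun x =>
    Finset.sum_nonneg fun m _ => (hposS _).le
  have hGpos : ∀ x, 0 ≤ G x := fun x =>
    Finset.sum_nonneg fun m _ => (hposT _).le
  have hIS : (0:ℝ) ≤ ∫ θ in (0:ℝ)..(2 * π), ρS θ ^ 2 :=
    intervalIntegral.integral_nonneg (by positivity) (fun x _ => sq_nonneg _)
  have hIT : (0:ℝ) ≤ ∫ θ in (0:ℝ)..(2 * π), ρT θ ^ 2 :=
    intervalIntegral.integral_nonneg (by positivity) (fun x _ => sq_nonneg _)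
  have hCS : ∫ θ in (0:ℝ)..(2 * π), F θ * G θ ≤
      Real.sqrt (∫ θ in (0:ℝ)..(2 * π), F θ ^ 2) *
      Real.sqrt (∫ θ in (0:ℝ)..(2 * π), G θ ^ 2) :=
    cs' F G hFc hGc hFpos hGpos
  have hSF : Real.sqrt (∫ θ in (0:ℝ)..(2 * π), F θ ^ 2) ≤
      (k:ℝ) * Real.sqrt (∫ θ in (0:ℝ)..(2 * π), ρS θ ^ 2) := by
    have h1 := sumint' ρS hρS hperS k (fun m => 2 * (m:ℝ) * π / k)
    calc Real.sqrt (∫ θ in (0:ℝ)..(2 * π), F θ ^ 2)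
        ≤ Real.sqrt ((k:ℝ)^2 * ∫ θ in (0:ℝ)..(2 * π), ρS θ ^ 2) := Real.sqrt_le_sqrt h1
      _ = (k:ℝ) * Real.sqrt (∫ θ in (0:ℝ)..(2 * π), ρS θ ^ 2) := by
          rw [Real.sqrt_mul (by positivity), Real.sqrt_sq hkpos.le]
  have hSG : Real.sqrt (∫ θ in (0:ℝ)..(2 * π), G θ ^ 2) ≤
      (k:ℝ) * Real.sqrt (∫ θ in (0:ℝ)..(2 * π), ρT θ ^ 2) := by
    have h1 := sumint' ρT hρT hperT k (fun m => α + 2 * (m:ℝ) * π / k)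
    have hGeq : ∀ θ : ℝ, G θ = ∑ m ∈ Finset.range k, ρT (θ + (α + 2 * (m:ℝ) * π / k)) := by
      intro θ; simp only [hG]; exact Finset.sum_congr rfl fun m _ => by ring_nf
    simp only [hGeq] at *
    calc Real.sqrt (∫ θ in (0:ℝ)..(2 * π),
          (∑ m ∈ Finset.range k, ρT (θ + (α + 2 * (m:ℝ) * π / k))) ^ 2)
        ≤ Real.sqrt ((k:ℝ)^2 * ∫ θ in (0:ℝ)..(2 * π), ρT θ ^ 2) := Real.sqrt_le_sqrt h1
      _ = (k:ℝ) * Real.sqrt (∫ θ in (0:ℝ)..(2 * π), ρT θ ^ 2) := by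
          rw [Real.sqrt_mul (by positivity), Real.sqrt_sq hkpos.le]
  have hmain : ∫ θ in (0:ℝ)..(2 * π), F θ * G θ ≤
      (k:ℝ)^2 * (Real.sqrt (∫ θ in (0:ℝ)..(2 * π), ρS θ ^ 2) *
        Real.sqrt (∫ θ in (0:ℝ)..(2 * π), ρT θ ^ 2)) := by
    refine hCS.trans ?_
    have := mul_le_mul hSF hSG (Real.sqrt_nonneg _) (by positivity)
    calc _ ≤ ((k:ℝ) * Real.sqrt (∫ θ in (0:ℝ)..(2 * π), ρS θ ^ 2)) *
        ((k:ℝ) * Real.sqrt (∫ θ in (0:ℝ)..(2 * π), ρT θ ^ 2)) := this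
      _ = _ := by ring
  have hRHS : Real.sqrt (((1 / 2) * ∫ θ in (0:ℝ)..(2 * π), (ρS θ) ^ 2) *
      ((1 / 2) * ∫ θ in (0:ℝ)..(2 * π), (ρT θ) ^ 2)) =
      (1/2) * (Real.sqrt (∫ θ in (0:ℝ)..(2 * π), ρS θ ^ 2) *
        Real.sqrt (∫ θ in (0:ℝ)..(2 * π), ρT θ ^ 2)) := by
    rw [Real.sqrt_mul (by positivity), Real.sqrt_mul (by norm_num) , Real.sqrt_mul (by norm_num)]
    rw [show Real.sqrt (1/2) * Real.sqrt (∫ θ in (0:ℝ)..(2 * π), ρS θ ^ 2) *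
      (Real.sqrt (1/2) * Real.sqrt (∫ θ in (0:ℝ)..(2 * π), ρT θ ^ 2)) =
      (Real.sqrt (1/2) * Real.sqrt (1/2)) * (Real.sqrt (∫ θ in (0:ℝ)..(2 * π), ρS θ ^ 2) *
       Real.sqrt (∫ θ in (0:ℝ)..(2 * π), ρT θ ^ 2)) by ring]
    rw [Real.mul_self_sqrt (by norm_num)]
  rw [hRHS]
  have hk2 : (0:ℝ) < 2 * (k:ℝ)^2 := by positivity
  rw [div_mul_eq_mul_div, one_mul, div_le_iff₀ hk2]  -- maybe not; do calc instead
  calc (∫ θ in (0:ℝ)..(2 * π), F θ * G θ)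
      ≤ (k:ℝ)^2 * (Real.sqrt (∫ θ in (0:ℝ)..(2 * π), ρS θ ^ 2) *
        Real.sqrt (∫ θ in (0:ℝ)..(2 * π), ρT θ ^ 2)) := hmain
    _ = (1/2) * (Real.sqrt (∫ θ in (0:ℝ)..(2 * π), ρS θ ^ 2) *
        Real.sqrt (∫ θ in (0:ℝ)..(2 * π), ρT θ ^ 2)) * (2 * (k:ℝ)^2) := by ring
end

section
/- Let S, T be planar star bodies with continuous positive radial functions, and α ∈ (0,2π). Then lim_{k→∞} (1/(2k²)) ∫_0^{2π} ρ_k(S,θ) ρ_k(T,θ+α) dθ = (1/π) Ã(S,B) Ã(T,B), where Ã(S,B) = (1/2)∫_0^{2π} ρ(S,θ) dθ and Ã(T,B) = (1/2)∫_0^{2π} ρ(T,θ) dθ. -/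
/-!
Each `ρ_k(S, ·)` is `2π/k`-periodic, so translating the factor `ρ_k(T, · + α)` by multiples of
`2π/k` does not change it; integrating term by term therefore gives
`∫ ρ_k(S) ρ_k(T, · + α) = k ∫ ρ(S) ρ_k(T, · + α)`. After dividing by `k²`, the factor
`ρ_k(T, θ + α) / k` is a Riemann sum of `ρ(T)` over a full period, which converges pointwise to
`(1/2π) ∫ ρ(T)` and is bounded by `sup |ρ(T)|`; dominated convergence finishes the proof.
-/

open Real Finset Filter Function Topology

theorem dist_left_riemann_sum_integral_le {f : ℝ → ℝ} {a b η : ℝ} {n : ℕ} (hab : a ≤ b)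
    (hn : n ≠ 0) (hf : ContinuousOn f (Set.Icc a b))
    (hη : ∀ x ∈ Set.Icc a b, ∀ y ∈ Set.Icc a b,
      dist x y ≤ (b - a) / n → dist (f x) (f y) ≤ η) :
    dist ((b - a) / n * ∑ i ∈ range n, f (a + i * ((b - a) / n))) (∫ x in a..b, f x)
      ≤ η * (b - a) := by
  set h := (b - a) / n with hh
  have hh0 : 0 ≤ h := div_nonneg (by linarith) n.cast_nonneg
  set x : ℕ → ℝ := fun i => a + i * h with hx
  have hxn : x n = b := by simp only [hx, hh]; field_simp; ring
  have hstep : ∀ i, x (i + 1) - x i = h := fun i => by simp only [hx]; push_cast; ring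
  have hxi : ∀ i, x i ≤ x (i + 1) := fun i => by linarith [hstep i]
  have hsub : ∀ i < n, Set.Icc (x i) (x (i + 1)) ⊆ Set.Icc a b := fun i hi => by
    refine Set.Icc_subset_Icc (le_add_of_nonneg_right (by positivity)) ?_
    rw [← hxn]; simp only [hx]; gcongr; exact_mod_cast hi
  have hint : ∀ i < n, IntervalIntegrable f MeasureTheory.volume (x i) (x (i + 1)) := fun i hi =>
    (hf.mono (hsub i hi)).intervalIntegrable_of_Icc (hxi i)
  have hsplit : ∫ t in a..b, f t = ∑ i ∈ range n, ∫ t in x i..x (i + 1), f t := by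
    rw [intervalIntegral.sum_integral_adjacent_intervals hint, hxn]
    simp [hx]
  have herr : h * ∑ i ∈ range n, f (x i) - ∫ t in a..b, f t
      = ∑ i ∈ range n, ∫ t in x i..x (i + 1), (f (x i) - f t) := by
    rw [hsplit, mul_sum, ← sum_sub_distrib]
    refine sum_congr rfl fun i hi => ?_
    rw [intervalIntegral.integral_sub intervalIntegrable_const (hint i (mem_range.mp hi)),
      intervalIntegral.integral_const, hstep, smul_eq_mul]
  have hpiece : ∀ i ∈ range n, ‖∫ t in x i..x (i + 1), (f (x i) - f t)‖ ≤ η * h := by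
    intro i hi
    replace hi := mem_range.mp hi
    simpa [hstep i, abs_of_nonneg hh0] using intervalIntegral.norm_integral_le_of_norm_le_const
      (f := fun t => f (x i) - f t) (a := x i) (b := x (i + 1)) (C := η) fun t ht => by
        rw [Set.uIoc_of_le (hxi i)] at ht
        rw [← dist_eq_norm]
        refine hη _ (hsub i hi ⟨le_rfl, hxi i⟩) _ (hsub i hi ⟨ht.1.le, ht.2⟩) ?_
        rw [Real.dist_eq, abs_sub_comm, abs_of_nonneg (by linarith [ht.1])]
        linarith [hstep i, ht.2]
  calc dist (h * ∑ i ∈ range n, f (x i)) (∫ t in a..b, f t)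
      ≤ ∑ i ∈ range n, η * h := by rw [dist_eq_norm, herr]; exact norm_sum_le_of_le _ hpiece
    _ = η * (b - a) := by rw [sum_const, card_range, nsmul_eq_mul, hh]; field_simp

theorem tendsto_left_riemann_sum {f : ℝ → ℝ} {a b : ℝ} (hab : a ≤ b)
    (hf : ContinuousOn f (Set.Icc a b)) :
    Tendsto (fun n : ℕ => (b - a) / n * ∑ i ∈ range n, f (a + i * ((b - a) / n))) atTop
      (𝓝 (∫ x in a..b, f x)) := by
  rw [Metric.tendsto_atTop]
  intro ε hε
  set η := ε / (b - a + 1) with hη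
  obtain ⟨δ, hδ, hfδ⟩ := Metric.uniformContinuousOn_iff_le.mp
    (isCompact_Icc.uniformContinuousOn_of_continuous hf) η (div_pos hε (by linarith))
  obtain ⟨N, hN⟩ : ∃ N : ℕ, ∀ n ≥ N, (b - a) / n < δ :=
    ((tendsto_const_div_atTop_nhds_zero_nat (b - a)).eventually
      (gt_mem_nhds hδ)).exists_forall_of_atTop
  refine ⟨N + 1, fun n hn => ?_⟩
  calc _ ≤ η * (b - a) := dist_left_riemann_sum_integral_le hab (by omega) hf
          fun x hx y hy hxy => hfδ x hx y hy (hxy.trans (hN n (by omega)).le)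
    _ < ε := by rw [hη, div_mul_eq_mul_div, div_lt_iff₀ (by linarith)]; nlinarith

/-- With `T = 2π` this is the paper's `k`-order radial function `ρ_k`. -/
noncomputable def korder (f : ℝ → ℝ) (T : ℝ) (k : ℕ) (θ : ℝ) : ℝ :=
  ∑ m ∈ range k, f (θ + m * (T / k))

section korder

variable {f g : ℝ → ℝ} {T : ℝ} {k : ℕ}

theorem continuous_korder (hf : Continuous f) : Continuous (korder f T k) :=
  continuous_finsetSum _ fun _ _ => hf.comp (by fun_prop)

theorem periodic_korder (hf : Periodic f T) : Periodic (korder f T k) (T / k) := fun θ => by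
  rcases eq_or_ne k 0 with rfl | hk
  · simp [korder]
  have hwrap : f (θ + k * (T / k)) = f (θ + (0 : ℕ) * (T / k)) := by
    rw [mul_div_cancel₀ T (Nat.cast_ne_zero.mpr hk), hf, Nat.cast_zero, zero_mul, add_zero]
  have hstep : ∀ m : ℕ, θ + T / k + m * (T / k) = θ + (m + 1 : ℕ) * (T / k) := fun m => by
    push_cast; ring
  simp only [korder, hstep]
  rw [← add_left_inj (f (θ + (0 : ℕ) * (T / k))),
    ← sum_range_succ' (fun m => f (θ + m * (T / k))), sum_range_succ, hwrap]

theorem abs_korder_div_le {M : ℝ} (hM : ∀ x, |f x| ≤ M) (θ : ℝ) :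
    |korder f T k θ / k| ≤ M := by
  rcases eq_or_ne k 0 with rfl | hk
  · simpa using (abs_nonneg _).trans (hM 0)
  have hk0 : (0 : ℝ) < k := by positivity
  rw [abs_div, Nat.abs_cast, div_le_iff₀ hk0]
  calc |korder f T k θ| ≤ ∑ m ∈ range k, M :=
        (abs_sum_le_sum_abs _ _).trans (sum_le_sum fun _ _ => hM _)
    _ = M * k := by rw [sum_const, card_range, nsmul_eq_mul, mul_comm]

theorem tendsto_korder_div (hf : Continuous f) (hfT : Periodic f T) (hT : 0 < T) (θ : ℝ) :
    Tendsto (fun k : ℕ => korder f T k θ / k) atTop (𝓝 ((∫ x in 0..T, f x) / T)) := by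
  have hsum := tendsto_left_riemann_sum (le_add_of_nonneg_right hT.le)
    (hf.continuousOn (s := Set.Icc θ (θ + T)))
  simp only [add_sub_cancel_left, hfT.intervalIntegral_add_eq θ 0, zero_add] at hsum
  refine (hsum.div_const T).congr fun k => ?_
  simp only [korder]
  field_simp

theorem integral_korder_mul (hf : Continuous f) (hfT : Periodic f T) (hg : Continuous g)
    (hgT : Periodic g (T / k)) :
    ∫ θ in 0..T, korder f T k θ * g θ = k * ∫ θ in 0..T, f θ * g θ := by
  rcases eq_or_ne k 0 with rfl | hk
  · simp [korder]
  have hfgT : Periodic (f * g) T := by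
    have hgT' := hgT.nat_mul k
    rw [mul_div_cancel₀ T (Nat.cast_ne_zero.mpr hk)] at hgT'
    exact hfT.mul hgT'
  have hshift (m : ℕ) :
      ∫ θ in 0..T, f (θ + m * (T / k)) * g θ = ∫ θ in 0..T, f θ * g θ := by
    calc ∫ θ in 0..T, f (θ + m * (T / k)) * g θ
        = ∫ θ in 0..T, (f * g) (θ + m * (T / k)) := by
          congr with θ; rw [Pi.mul_apply, hgT.nat_mul m]
      _ = ∫ θ in 0..T, f θ * g θ := by
          rw [intervalIntegral.integral_comp_add_right, zero_add, add_comm T,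
            hfgT.intervalIntegral_add_eq _ 0, zero_add]; rfl
  simp only [korder, sum_mul]
  rw [intervalIntegral.integral_finsetSum fun (m : ℕ) _ =>
    (by fun_prop : Continuous fun θ => f (θ + (m : ℝ) * (T / k)) * g θ).intervalIntegrable 0 T]
  simp [hshift]

theorem tendsto_integral_mul_korder_div (hf : Continuous f) (hg : Continuous g)
    (hgT : Periodic g T) (hT : 0 < T) (a b α : ℝ) :
    Tendsto (fun k : ℕ => ∫ θ in a..b, f θ * (korder g T k (θ + α) / k)) atTop
      (𝓝 ((∫ θ in a..b, f θ) * ((∫ θ in 0..T, g θ) / T))) := by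
  obtain ⟨M, hM⟩ := isBounded_iff_forall_norm_le.mp (hgT.isBounded_of_continuous hT.ne' hg)
  have hM' : ∀ x, |g x| ≤ M := fun x => hM _ ⟨x, rfl⟩
  rw [← intervalIntegral.integral_mul_const]
  refine intervalIntegral.tendsto_integral_filter_of_dominated_convergence (fun θ => |f θ| * M)
    (.of_forall fun k =>
      (hf.mul (((continuous_korder hg).comp (continuous_add_const α)).div_const _))
        |>.aestronglyMeasurable)
    (.of_forall fun k => .of_forall fun θ _ => ?_)
    ((hf.abs.mul continuous_const).intervalIntegrable _ _)
    (.of_forall fun θ _ => (tendsto_korder_div hg hgT hT (θ + α)).const_mul (f θ))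
  rw [Real.norm_eq_abs, abs_mul]
  exact mul_le_mul_of_nonneg_left (abs_korder_div_le hM' _) (abs_nonneg _)

theorem tendsto_integral_korder_mul_korder_div_sq (hf : Continuous f) (hfT : Periodic f T)
    (hg : Continuous g) (hgT : Periodic g T) (hT : 0 < T) (α : ℝ) :
    Tendsto (fun k : ℕ => (∫ θ in 0..T, korder f T k θ * korder g T k (θ + α)) / k ^ 2)
      atTop (𝓝 ((∫ θ in 0..T, f θ) * ((∫ θ in 0..T, g θ) / T))) := by
  refine (tendsto_integral_mul_korder_div hf hg hgT hT 0 T α).congr' ?_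
  filter_upwards [eventually_ne_atTop 0] with k hk
  rw [integral_korder_mul (g := fun θ => korder g T k (θ + α)) hf hfT
    ((continuous_korder hg).comp (continuous_add_const α)) ((periodic_korder hgT).add_const α)]
  simp only [mul_div_assoc', intervalIntegral.integral_div]
  field_simp

end korder

theorem korder_mixed_integral_limit_general (ρS ρT : ℝ → ℝ)
    (hρS : Continuous ρS) (hperS : ∀ θ, ρS (θ + 2 * π) = ρS θ)
    (hρT : Continuous ρT) (hperT : ∀ θ, ρT (θ + 2 * π) = ρT θ)
    (α : ℝ) :
    Tendsto (fun k : ℕ =>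
        (1 / (2 * (k : ℝ) ^ 2)) *
          ∫ θ in (0:ℝ)..(2 * π),
            (∑ m ∈ Finset.range k, ρS (θ + 2 * (m:ℝ) * π / k)) *
            (∑ m ∈ Finset.range k, ρT (θ + α + 2 * (m:ℝ) * π / k)))
      atTop
      (nhds ((1 / π) * (((1 / 2) * ∫ θ in (0:ℝ)..(2 * π), ρS θ) *
                        ((1 / 2) * ∫ θ in (0:ℝ)..(2 * π), ρT θ)))) := by
  have hkorder : ∀ (ρ : ℝ → ℝ) (k : ℕ) (θ : ℝ),
      ∑ m ∈ range k, ρ (θ + 2 * (m : ℝ) * π / k) = korder ρ (2 * π) k θ :=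
    fun ρ k θ => sum_congr rfl fun m _ => by ring_nf
  have hlim := tendsto_integral_korder_mul_korder_div_sq hρS hperS hρT hperT two_pi_pos α
  convert hlim.const_mul (1 / 2) using 2 with k
  · simp only [hkorder]
    ring
  · ring

theorem korder_mixed_integral_limit (ρS ρT : ℝ → ℝ)
    (hρS : Continuous ρS) (hposS : ∀ θ, 0 < ρS θ) (hperS : ∀ θ, ρS (θ + 2 * π) = ρS θ)
    (hρT : Continuous ρT) (hposT : ∀ θ, 0 < ρT θ) (hperT : ∀ θ, ρT (θ + 2 * π) = ρT θ)
    (α : ℝ) (hα : α ∈ Set.Ioo 0 (2 * π)) :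
    Tendsto (fun k : ℕ =>
        (1 / (2 * (k : ℝ) ^ 2)) *
          ∫ θ in (0:ℝ)..(2 * π),
            (∑ m ∈ Finset.range k, ρS (θ + 2 * (m:ℝ) * π / k)) *
            (∑ m ∈ Finset.range k, ρT (θ + α + 2 * (m:ℝ) * π / k)))
      atTop
      (nhds ((1 / π) * (((1 / 2) * ∫ θ in (0:ℝ)..(2 * π), ρS θ) *
                        ((1 / 2) * ∫ θ in (0:ℝ)..(2 * π), ρT θ)))) :=
  korder_mixed_integral_limit_general ρS ρT hρS hperS hρT hperT α
end
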